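/- Let λ ∈ [−1,1], let ρ(x,y) = x² + y² + 1, and let f be a continuous function on I = [0,1]×[0,1] belonging to the weighted space C⁰_ρ, i.e. |f(x,y)| ≤ M_f ρ(x,y) for some constant M_f > 0. Then the bivariate λ-Bernstein operators converge to f in the weighted norm: lim_{n,m→∞} ‖B̄_{n,m}(f; ·,·; λ) − f‖_ρ = 0, where ‖g‖_ρ = sup_{(x,y)∈I} |g(x,y)| / ρ(x,y). -/

import Mathlib

open Finset Filter

/-- Bernstein basis polynomial `b_{n,i}(x) = C(n,i) x^i (1-x)^(n-i)`. -/
noncomputable def bern (n i : ℕ) (x : ℝ) : ℝ :=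
  (n.choose i : ℝ) * x ^ i * (1 - x) ^ (n - i)

/-- Bézier basis `b̃_{n,i}(λ; x)` with shape parameter `lam`. -/
noncomputable def bez (n : ℕ) (lam x : ℝ) (i : ℕ) : ℝ :=
  if i = 0 then bern n 0 x - lam / ((n : ℝ) + 1) * bern (n + 1) 1 x
  else if i = n then bern n n x - lam / ((n : ℝ) + 1) * bern (n + 1) n x
  else bern n i x + lam * (((n : ℝ) - 2 * (i : ℝ) + 1) / ((n : ℝ) ^ 2 - 1) * bern (n + 1) i x
    - ((n : ℝ) - 2 * (i : ℝ) - 1) / ((n : ℝ) ^ 2 - 1) * bern (n + 1) (i + 1) x)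

/-- The λ-Bernstein operator `B_{n,λ}(f; x) = ∑_{i=0}^n f(i/n) b̃_{n,i}(λ; x)`. -/
noncomputable def lB (n : ℕ) (lam : ℝ) (f : ℝ → ℝ) (x : ℝ) : ℝ :=
  ∑ i ∈ Finset.range (n + 1), f ((i : ℝ) / (n : ℝ)) * bez n lam x i

/-- The bivariate λ-Bernstein operator
`B̄_{n,m}(f; x, y; λ) = ∑_{k₁=0}^n ∑_{k₂=0}^m f(k₁/n, k₂/m) b̃_{n,k₁}(λ;x) b̃_{m,k₂}(λ;y)`. -/
noncomputable def bivB (n m : ℕ) (lam : ℝ) (f : ℝ → ℝ → ℝ) (x y : ℝ) : ℝ :=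
  ∑ k₁ ∈ Finset.range (n + 1), ∑ k₂ ∈ Finset.range (m + 1),
    f ((k₁ : ℝ) / (n : ℝ)) ((k₂ : ℝ) / (m : ℝ)) * bez n lam x k₁ * bez m lam y k₂

lemma bern_eval (n i : ℕ) (x : ℝ) : bern n i x = (bernsteinPolynomial ℝ n i).eval x := by
  simp [bern, bernsteinPolynomial]

lemma bern_nonneg {n i : ℕ} {x : ℝ} (h0 : 0 ≤ x) (h1 : x ≤ 1) : 0 ≤ bern n i x := by
  have : 0 ≤ 1 - x := by linarith
  unfold bern; positivity

lemma sum_bern (n : ℕ) (x : ℝ) : ∑ i ∈ Finset.range (n + 1), bern n i x = 1 := by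
  have h := congrArg (Polynomial.eval x) (bernsteinPolynomial.sum ℝ n)
  simpa [Polynomial.eval_finset_sum, bern_eval] using h

lemma var_bern (n : ℕ) (x : ℝ) :
    ∑ i ∈ Finset.range (n + 1), ((n : ℝ) * x - (i : ℝ)) ^ 2 * bern n i x
      = (n : ℝ) * x * (1 - x) := by
  have h := congrArg (Polynomial.eval x) (bernsteinPolynomial.variance ℝ n)
  simpa [Polynomial.eval_finset_sum, bern_eval, nsmul_eq_mul] using h

lemma var_bern' {n : ℕ} (hn : 1 ≤ n) (x : ℝ) :
    ∑ i ∈ Finset.range (n + 1), ((i : ℝ) / (n : ℝ) - x) ^ 2 * bern n i x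
      = x * (1 - x) / (n : ℝ) := by
  have hn' : (0 : ℝ) < n := by exact_mod_cast hn
  calc ∑ i ∈ Finset.range (n + 1), ((i : ℝ) / (n : ℝ) - x) ^ 2 * bern n i x
      = (∑ i ∈ Finset.range (n + 1), ((n : ℝ) * x - (i : ℝ)) ^ 2 * bern n i x) / (n : ℝ) ^ 2 := by
        rw [Finset.sum_div]
        refine Finset.sum_congr rfl fun i _ => ?_
        have h : ((i : ℝ) / (n : ℝ) - x) = -(((n : ℝ) * x - (i : ℝ))) / (n : ℝ) := by
          field_simp
          ring
        rw [h, div_pow, neg_sq]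
        ring
    _ = x * (1 - x) / (n : ℝ) := by rw [var_bern]; field_simp

lemma abs_err_le {n : ℕ} (hn : 2 ≤ n) {lam x : ℝ} (hl : |lam| ≤ 1) (h0 : 0 ≤ x) (h1 : x ≤ 1)
    (i : ℕ) (hi : i ≤ n) :
    |bez n lam x i - bern n i x|
      ≤ (bern (n + 1) i x + bern (n + 1) (i + 1) x) / ((n : ℝ) - 1) := by
  have hn2 : (2 : ℝ) ≤ (n : ℝ) := by exact_mod_cast hn
  have hne : (0 : ℝ) < (n : ℝ) - 1 := by linarith
  have hb1 : 0 ≤ bern (n + 1) i x := bern_nonneg h0 h1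
  have hb2 : 0 ≤ bern (n + 1) (i + 1) x := bern_nonneg h0 h1
  have hiR : (i : ℝ) ≤ (n : ℝ) := by exact_mod_cast hi
  have hiR0 : (0 : ℝ) ≤ (i : ℝ) := by positivity
  rcases eq_or_ne i 0 with rfl | hi0
  · have h : bez n lam x 0 - bern n 0 x = -(lam / ((n : ℝ) + 1) * bern (n + 1) 1 x) := by
      simp [bez]
    rw [h, abs_neg, abs_mul, abs_div, abs_of_nonneg (show (0:ℝ) ≤ (n:ℝ)+1 by linarith),
      abs_of_nonneg hb2]
    rw [div_mul_eq_mul_div, div_le_div_iff₀ (by linarith) hne]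
    have e1 : |lam| * bern (n + 1) (0 + 1) x ≤ bern (n + 1) (0 + 1) x :=
      mul_le_of_le_one_left hb2 hl
    nlinarith [hb1, hb2]
  rcases eq_or_ne i n with rfl | hin
  · have h : bez i lam x i - bern i i x = -(lam / ((i : ℝ) + 1) * bern (i + 1) i x) := by
      simp [bez, hi0]
    rw [h, abs_neg, abs_mul, abs_div, abs_of_nonneg (show (0:ℝ) ≤ (i:ℝ)+1 by linarith),
      abs_of_nonneg hb1]
    rw [div_mul_eq_mul_div, div_le_div_iff₀ (by linarith) hne]
    have e1 : |lam| * bern (i + 1) i x ≤ bern (i + 1) i x :=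
      mul_le_of_le_one_left hb1 hl
    nlinarith [hb1, hb2]
  · have h : bez n lam x i - bern n i x
        = lam * (((n : ℝ) - 2 * (i : ℝ) + 1) / ((n : ℝ) ^ 2 - 1) * bern (n + 1) i x
          - ((n : ℝ) - 2 * (i : ℝ) - 1) / ((n : ℝ) ^ 2 - 1) * bern (n + 1) (i + 1) x) := by
      simp [bez, hi0, hin]
    have hd : (0:ℝ) < (n : ℝ) ^ 2 - 1 := by nlinarith
    have hc1 : |((n : ℝ) - 2 * (i : ℝ) + 1) / ((n : ℝ) ^ 2 - 1)| ≤ 1 / ((n : ℝ) - 1) := by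
      rw [abs_div, abs_of_pos hd, div_le_div_iff₀ hd hne]
      have habs : |(n : ℝ) - 2 * (i : ℝ) + 1| ≤ (n : ℝ) + 1 :=
        abs_le.mpr ⟨by linarith, by linarith⟩
      nlinarith [habs]
    have hc2 : |((n : ℝ) - 2 * (i : ℝ) - 1) / ((n : ℝ) ^ 2 - 1)| ≤ 1 / ((n : ℝ) - 1) := by
      rw [abs_div, abs_of_pos hd, div_le_div_iff₀ hd hne]
      have habs : |(n : ℝ) - 2 * (i : ℝ) - 1| ≤ (n : ℝ) + 1 :=
        abs_le.mpr ⟨by linarith, by linarith⟩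
      nlinarith [habs]
    rw [h]
    calc |lam * (((n : ℝ) - 2 * (i : ℝ) + 1) / ((n : ℝ) ^ 2 - 1) * bern (n + 1) i x
          - ((n : ℝ) - 2 * (i : ℝ) - 1) / ((n : ℝ) ^ 2 - 1) * bern (n + 1) (i + 1) x)|
        ≤ |((n : ℝ) - 2 * (i : ℝ) + 1) / ((n : ℝ) ^ 2 - 1) * bern (n + 1) i x
          - ((n : ℝ) - 2 * (i : ℝ) - 1) / ((n : ℝ) ^ 2 - 1) * bern (n + 1) (i + 1) x| := by
          rw [abs_mul]; exact mul_le_of_le_one_left (abs_nonneg _) hl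
      _ ≤ |((n : ℝ) - 2 * (i : ℝ) + 1) / ((n : ℝ) ^ 2 - 1)| * bern (n + 1) i x
          + |((n : ℝ) - 2 * (i : ℝ) - 1) / ((n : ℝ) ^ 2 - 1)| * bern (n + 1) (i + 1) x := by
          refine (abs_sub _ _).trans ?_
          rw [abs_mul, abs_mul, abs_of_nonneg hb1, abs_of_nonneg hb2]
      _ ≤ 1 / ((n : ℝ) - 1) * bern (n + 1) i x + 1 / ((n : ℝ) - 1) * bern (n + 1) (i + 1) x := by
          gcongr
      _ = (bern (n + 1) i x + bern (n + 1) (i + 1) x) / ((n : ℝ) - 1) := by ring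

lemma sum_abs_err {n : ℕ} (hn : 2 ≤ n) {lam x : ℝ} (hl : |lam| ≤ 1) (h0 : 0 ≤ x) (h1 : x ≤ 1) :
    ∑ i ∈ Finset.range (n + 1), |bez n lam x i - bern n i x| ≤ 2 / ((n : ℝ) - 1) := by
  have hn2 : (2 : ℝ) ≤ (n : ℝ) := by exact_mod_cast hn
  have hne : (0 : ℝ) < (n : ℝ) - 1 := by linarith
  have S1 : ∑ i ∈ Finset.range (n + 1), bern (n + 1) i x ≤ 1 := by
    rw [← sum_bern (n + 1) x]
    exact Finset.sum_le_sum_of_subset_of_nonneg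
      (Finset.range_subset_range.mpr (by omega)) (fun i _ _ => bern_nonneg h0 h1)
  have S2 : ∑ i ∈ Finset.range (n + 1), bern (n + 1) (i + 1) x ≤ 1 := by
    have h := Finset.sum_range_succ' (fun j => bern (n + 1) j x) (n + 1)
    have h2 := sum_bern (n + 1) x
    have h3 : 0 ≤ bern (n + 1) 0 x := bern_nonneg h0 h1
    linarith [h.symm.trans h2]
  calc ∑ i ∈ Finset.range (n + 1), |bez n lam x i - bern n i x|
      ≤ ∑ i ∈ Finset.range (n + 1),
          (bern (n + 1) i x + bern (n + 1) (i + 1) x) / ((n : ℝ) - 1) :=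
        Finset.sum_le_sum fun i hi =>
          abs_err_le hn hl h0 h1 i (Nat.lt_succ_iff.mp (Finset.mem_range.mp hi))
    _ = ((∑ i ∈ Finset.range (n + 1), bern (n + 1) i x)
          + ∑ i ∈ Finset.range (n + 1), bern (n + 1) (i + 1) x) / ((n : ℝ) - 1) := by
        rw [← Finset.sum_div, Finset.sum_add_distrib]
    _ ≤ (1 + 1) / ((n : ℝ) - 1) := by gcongr
    _ = 2 / ((n : ℝ) - 1) := by norm_num

set_option maxHeartbeats 1000000 in
lemma key_est (lam : ℝ) (hl : |lam| ≤ 1) (f : ℝ → ℝ → ℝ) (F δ ε : ℝ)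
    (hδ : 0 < δ) (hε : 0 ≤ ε)
    (hFb : ∀ x ∈ Set.Icc (0:ℝ) 1, ∀ y ∈ Set.Icc (0:ℝ) 1, |f x y| ≤ F)
    (hmod : ∀ x ∈ Set.Icc (0:ℝ) 1, ∀ y ∈ Set.Icc (0:ℝ) 1, ∀ u ∈ Set.Icc (0:ℝ) 1,
      ∀ v ∈ Set.Icc (0:ℝ) 1, |x - u| < δ → |y - v| < δ → |f x y - f u v| ≤ ε)
    {n m : ℕ} (hn : 2 ≤ n) (hm : 2 ≤ m) {x y : ℝ}
    (hx : x ∈ Set.Icc (0:ℝ) 1) (hy : y ∈ Set.Icc (0:ℝ) 1) :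
    |bivB n m lam f x y - f x y|
      ≤ ε + 2 * F / δ ^ 2 * (1 / (n : ℝ) + 1 / (m : ℝ))
        + F * (2 / ((n : ℝ) - 1) + 2 / ((m : ℝ) - 1)
          + 2 / ((n : ℝ) - 1) * (2 / ((m : ℝ) - 1))) := by
  obtain ⟨hx0, hx1⟩ := hx
  obtain ⟨hy0, hy1⟩ := hy
  have hF0 : 0 ≤ F := le_trans (abs_nonneg _) (hFb 0 (by norm_num) 0 (by norm_num))
  have hnR : (2 : ℝ) ≤ (n : ℝ) := by exact_mod_cast hn
  have hmR : (2 : ℝ) ≤ (m : ℝ) := by exact_mod_cast hm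
  have hnpos : (0 : ℝ) < (n : ℝ) := by linarith
  have hmpos : (0 : ℝ) < (m : ℝ) := by linarith
  set K := 2 * F / δ ^ 2 with hK
  have hK0 : 0 ≤ K := by positivity
  -- grid points lie in [0,1]
  have hgridn : ∀ i ∈ Finset.range (n + 1), (i : ℝ) / (n : ℝ) ∈ Set.Icc (0:ℝ) 1 := by
    intro i hi
    have : (i : ℝ) ≤ (n : ℝ) := by
      exact_mod_cast Nat.lt_succ_iff.mp (Finset.mem_range.mp hi)
    exact ⟨by positivity, by rw [div_le_one hnpos]; exact this⟩
  have hgridm : ∀ j ∈ Finset.range (m + 1), (j : ℝ) / (m : ℝ) ∈ Set.Icc (0:ℝ) 1 := by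
    intro j hj
    have : (j : ℝ) ≤ (m : ℝ) := by
      exact_mod_cast Nat.lt_succ_iff.mp (Finset.mem_range.mp hj)
    exact ⟨by positivity, by rw [div_le_one hmpos]; exact this⟩
  -- pointwise modulus estimate
  have hgc : ∀ i ∈ Finset.range (n + 1), ∀ j ∈ Finset.range (m + 1),
      |f ((i : ℝ) / n) ((j : ℝ) / m) - f x y|
        ≤ ε + K * (((i : ℝ) / n - x) ^ 2 + ((j : ℝ) / m - y) ^ 2) := by
    intro i hi j hj
    have hu := hgridn i hi
    have hv := hgridm j hj
    by_cases hcase : |x - (i : ℝ) / n| < δ ∧ |y - (j : ℝ) / m| < δ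
    · have h1 := hmod x ⟨hx0, hx1⟩ y ⟨hy0, hy1⟩ _ hu _ hv hcase.1 hcase.2
      rw [abs_sub_comm] at h1
      have h2 : 0 ≤ K * (((i : ℝ) / n - x) ^ 2 + ((j : ℝ) / m - y) ^ 2) := by positivity
      linarith
    · have hF2 : |f ((i : ℝ) / n) ((j : ℝ) / m) - f x y| ≤ 2 * F := by
        calc |f ((i : ℝ) / n) ((j : ℝ) / m) - f x y|
            ≤ |f ((i : ℝ) / n) ((j : ℝ) / m)| + |f x y| := abs_sub _ _
          _ ≤ F + F := add_le_add (hFb _ hu _ hv) (hFb x ⟨hx0, hx1⟩ y ⟨hy0, hy1⟩)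
          _ = 2 * F := by ring
      have hS : δ ^ 2 ≤ ((i : ℝ) / n - x) ^ 2 + ((j : ℝ) / m - y) ^ 2 := by
        push_neg at hcase
        rcases le_or_gt δ |x - (i : ℝ) / n| with h | h
        · nlinarith [sq_abs (x - (i : ℝ) / n), sq_nonneg (((j : ℝ) / m - y)),
            sq_nonneg (x - (i : ℝ) / n), abs_nonneg (x - (i : ℝ) / n)]
        · have h2 := hcase h
          nlinarith [sq_abs (y - (j : ℝ) / m), sq_nonneg (((i : ℝ) / n - x)),
            abs_nonneg (y - (j : ℝ) / m)]
      have h3 : 2 * F ≤ K * (((i : ℝ) / n - x) ^ 2 + ((j : ℝ) / m - y) ^ 2) := by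
        have : K * δ ^ 2 ≤ K * (((i : ℝ) / n - x) ^ 2 + ((j : ℝ) / m - y) ^ 2) :=
          mul_le_mul_of_nonneg_left hS hK0
        have hKd : K * δ ^ 2 = 2 * F := by rw [hK, div_mul_cancel₀ _ (pow_ne_zero 2 hδ.ne')]
        linarith
      linarith
  -- split identity
  have hsplit : bivB n m lam f x y
      = (∑ i ∈ Finset.range (n + 1), ∑ j ∈ Finset.range (m + 1),
          (f ((i : ℝ) / n) ((j : ℝ) / m) - f x y) * (bern n i x * bern m j y))
        + ((∑ i ∈ Finset.range (n + 1), ∑ j ∈ Finset.range (m + 1),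
            (f x y * bern n i x) * bern m j y)
          + ∑ i ∈ Finset.range (n + 1), ∑ j ∈ Finset.range (m + 1),
            f ((i : ℝ) / n) ((j : ℝ) / m) *
              (bern n i x * (bez m lam y j - bern m j y)
               + (bez n lam x i - bern n i x) * bern m j y
               + (bez n lam x i - bern n i x) * (bez m lam y j - bern m j y))) := by
    unfold bivB
    simp only [← Finset.sum_add_distrib]
    refine Finset.sum_congr rfl fun i _ => ?_
    refine Finset.sum_congr rfl fun j _ => ?_
    ring
  have hmid : (∑ i ∈ Finset.range (n + 1), ∑ j ∈ Finset.range (m + 1),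
      (f x y * bern n i x) * bern m j y) = f x y := by
    rw [← Finset.sum_mul_sum, ← Finset.mul_sum, sum_bern, sum_bern, mul_one, mul_one]
  have hdiff : bivB n m lam f x y - f x y
      = (∑ i ∈ Finset.range (n + 1), ∑ j ∈ Finset.range (m + 1),
          (f ((i : ℝ) / n) ((j : ℝ) / m) - f x y) * (bern n i x * bern m j y))
        + ∑ i ∈ Finset.range (n + 1), ∑ j ∈ Finset.range (m + 1),
            f ((i : ℝ) / n) ((j : ℝ) / m) *
              (bern n i x * (bez m lam y j - bern m j y)
               + (bez n lam x i - bern n i x) * bern m j y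
               + (bez n lam x i - bern n i x) * (bez m lam y j - bern m j y)) := by
    rw [hsplit, hmid]; ring
  -- Bound on the first (classical Bernstein) part
  have hT1 : |∑ i ∈ Finset.range (n + 1), ∑ j ∈ Finset.range (m + 1),
      (f ((i : ℝ) / n) ((j : ℝ) / m) - f x y) * (bern n i x * bern m j y)|
      ≤ ε + K * (1 / (n : ℝ) + 1 / (m : ℝ)) := by
    have e1 : (∑ i ∈ Finset.range (n + 1), ε * bern n i x) = ε := by
      rw [← Finset.mul_sum, sum_bern, mul_one]
    have e2 : (∑ i ∈ Finset.range (n + 1), K * ((i : ℝ) / n - x) ^ 2 * bern n i x)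
        = K * (x * (1 - x) / (n : ℝ)) := by
      simp only [mul_assoc]
      rw [← Finset.mul_sum, var_bern' (by omega : 1 ≤ n) x]
    have e3 : (∑ j ∈ Finset.range (m + 1), K * ((j : ℝ) / m - y) ^ 2 * bern m j y)
        = K * (y * (1 - y) / (m : ℝ)) := by
      simp only [mul_assoc]
      rw [← Finset.mul_sum, var_bern' (by omega : 1 ≤ m) y]
    calc |∑ i ∈ Finset.range (n + 1), ∑ j ∈ Finset.range (m + 1),
        (f ((i : ℝ) / n) ((j : ℝ) / m) - f x y) * (bern n i x * bern m j y)|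
        ≤ ∑ i ∈ Finset.range (n + 1), |∑ j ∈ Finset.range (m + 1),
            (f ((i : ℝ) / n) ((j : ℝ) / m) - f x y) * (bern n i x * bern m j y)| :=
          Finset.abs_sum_le_sum_abs _ _
      _ ≤ ∑ i ∈ Finset.range (n + 1), ∑ j ∈ Finset.range (m + 1),
            |(f ((i : ℝ) / n) ((j : ℝ) / m) - f x y) * (bern n i x * bern m j y)| :=
          Finset.sum_le_sum fun i _ => Finset.abs_sum_le_sum_abs _ _
      _ ≤ ∑ i ∈ Finset.range (n + 1), ∑ j ∈ Finset.range (m + 1),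
            ((ε * bern n i x) * bern m j y
              + ((K * ((i : ℝ) / n - x) ^ 2 * bern n i x) * bern m j y
              + bern n i x * (K * ((j : ℝ) / m - y) ^ 2 * bern m j y))) := by
          refine Finset.sum_le_sum fun i hi => Finset.sum_le_sum fun j hj => ?_
          have ha : 0 ≤ bern n i x := bern_nonneg hx0 hx1
          have hb : 0 ≤ bern m j y := bern_nonneg hy0 hy1
          rw [abs_mul, abs_of_nonneg (mul_nonneg ha hb)]
          calc |f ((i : ℝ) / n) ((j : ℝ) / m) - f x y| * (bern n i x * bern m j y)
              ≤ (ε + K * (((i : ℝ) / n - x) ^ 2 + ((j : ℝ) / m - y) ^ 2))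
                  * (bern n i x * bern m j y) :=
                mul_le_mul_of_nonneg_right (hgc i hi j hj) (mul_nonneg ha hb)
            _ = (ε * bern n i x) * bern m j y
                + ((K * ((i : ℝ) / n - x) ^ 2 * bern n i x) * bern m j y
                + bern n i x * (K * ((j : ℝ) / m - y) ^ 2 * bern m j y)) := by ring
      _ = (∑ i ∈ Finset.range (n + 1), ε * bern n i x)
            * (∑ j ∈ Finset.range (m + 1), bern m j y)
          + ((∑ i ∈ Finset.range (n + 1), K * ((i : ℝ) / n - x) ^ 2 * bern n i x)
              * (∑ j ∈ Finset.range (m + 1), bern m j y)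
            + (∑ i ∈ Finset.range (n + 1), bern n i x)
              * (∑ j ∈ Finset.range (m + 1), K * ((j : ℝ) / m - y) ^ 2 * bern m j y)) := by
          rw [Finset.sum_mul_sum, Finset.sum_mul_sum, Finset.sum_mul_sum]
          simp only [← Finset.sum_add_distrib]
      _ = ε + (K * (x * (1 - x) / (n : ℝ)) + K * (y * (1 - y) / (m : ℝ))) := by
          rw [e1, e2, e3, sum_bern, sum_bern, mul_one, mul_one, one_mul]
      _ ≤ ε + K * (1 / (n : ℝ) + 1 / (m : ℝ)) := by
          have d1 : x * (1 - x) / (n : ℝ) ≤ 1 / (n : ℝ) := by gcongr <;> nlinarith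
          have d2 : y * (1 - y) / (m : ℝ) ≤ 1 / (m : ℝ) := by gcongr <;> nlinarith
          have g1 := mul_le_mul_of_nonneg_left d1 hK0
          have g2 := mul_le_mul_of_nonneg_left d2 hK0
          have g3 : K * (1 / (n : ℝ)) + K * (1 / (m : ℝ))
              = K * (1 / (n : ℝ) + 1 / (m : ℝ)) := by ring
          linarith
  -- Bound on the correction part
  have hSA : ∑ i ∈ Finset.range (n + 1), |bez n lam x i - bern n i x| ≤ 2 / ((n : ℝ) - 1) :=
    sum_abs_err hn hl hx0 hx1
  have hSB : ∑ j ∈ Finset.range (m + 1), |bez m lam y j - bern m j y| ≤ 2 / ((m : ℝ) - 1) :=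
    sum_abs_err hm hl hy0 hy1
  have hSA0 : 0 ≤ ∑ i ∈ Finset.range (n + 1), |bez n lam x i - bern n i x| :=
    Finset.sum_nonneg fun i _ => abs_nonneg _
  have hSB0 : 0 ≤ ∑ j ∈ Finset.range (m + 1), |bez m lam y j - bern m j y| :=
    Finset.sum_nonneg fun j _ => abs_nonneg _
  have hT2 : |∑ i ∈ Finset.range (n + 1), ∑ j ∈ Finset.range (m + 1),
      f ((i : ℝ) / n) ((j : ℝ) / m) *
        (bern n i x * (bez m lam y j - bern m j y)
         + (bez n lam x i - bern n i x) * bern m j y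
         + (bez n lam x i - bern n i x) * (bez m lam y j - bern m j y))|
      ≤ F * (2 / ((n : ℝ) - 1) + 2 / ((m : ℝ) - 1)
          + 2 / ((n : ℝ) - 1) * (2 / ((m : ℝ) - 1))) := by
    calc |∑ i ∈ Finset.range (n + 1), ∑ j ∈ Finset.range (m + 1),
        f ((i : ℝ) / n) ((j : ℝ) / m) *
          (bern n i x * (bez m lam y j - bern m j y)
           + (bez n lam x i - bern n i x) * bern m j y
           + (bez n lam x i - bern n i x) * (bez m lam y j - bern m j y))|
        ≤ ∑ i ∈ Finset.range (n + 1), |∑ j ∈ Finset.range (m + 1),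
            f ((i : ℝ) / n) ((j : ℝ) / m) *
              (bern n i x * (bez m lam y j - bern m j y)
               + (bez n lam x i - bern n i x) * bern m j y
               + (bez n lam x i - bern n i x) * (bez m lam y j - bern m j y))| :=
          Finset.abs_sum_le_sum_abs _ _
      _ ≤ ∑ i ∈ Finset.range (n + 1), ∑ j ∈ Finset.range (m + 1),
            |f ((i : ℝ) / n) ((j : ℝ) / m) *
              (bern n i x * (bez m lam y j - bern m j y)
               + (bez n lam x i - bern n i x) * bern m j y
               + (bez n lam x i - bern n i x) * (bez m lam y j - bern m j y))| :=
          Finset.sum_le_sum fun i _ => Finset.abs_sum_le_sum_abs _ _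
      _ ≤ ∑ i ∈ Finset.range (n + 1), ∑ j ∈ Finset.range (m + 1),
            (bern n i x * (F * |bez m lam y j - bern m j y|)
              + (|bez n lam x i - bern n i x| * (F * bern m j y)
              + |bez n lam x i - bern n i x| * (F * |bez m lam y j - bern m j y|))) := by
          refine Finset.sum_le_sum fun i hi => Finset.sum_le_sum fun j hj => ?_
          have ha : 0 ≤ bern n i x := bern_nonneg hx0 hx1
          have hb : 0 ≤ bern m j y := bern_nonneg hy0 hy1
          have hgF : |f ((i : ℝ) / n) ((j : ℝ) / m)| ≤ F :=
            hFb _ (hgridn i hi) _ (hgridm j hj)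
          have hs : |bern n i x * (bez m lam y j - bern m j y)
               + (bez n lam x i - bern n i x) * bern m j y
               + (bez n lam x i - bern n i x) * (bez m lam y j - bern m j y)|
              ≤ bern n i x * |bez m lam y j - bern m j y|
                + |bez n lam x i - bern n i x| * bern m j y
                + |bez n lam x i - bern n i x| * |bez m lam y j - bern m j y| := by
            refine (abs_add_three _ _ _).trans ?_
            rw [abs_mul, abs_mul, abs_mul, abs_of_nonneg ha, abs_of_nonneg hb]
          rw [abs_mul]
          calc |f ((i : ℝ) / n) ((j : ℝ) / m)| * |bern n i x * (bez m lam y j - bern m j y)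
               + (bez n lam x i - bern n i x) * bern m j y
               + (bez n lam x i - bern n i x) * (bez m lam y j - bern m j y)|
              ≤ F * (bern n i x * |bez m lam y j - bern m j y|
                + |bez n lam x i - bern n i x| * bern m j y
                + |bez n lam x i - bern n i x| * |bez m lam y j - bern m j y|) :=
                mul_le_mul hgF hs (abs_nonneg _) hF0
            _ = bern n i x * (F * |bez m lam y j - bern m j y|)
                + (|bez n lam x i - bern n i x| * (F * bern m j y)
                + |bez n lam x i - bern n i x| * (F * |bez m lam y j - bern m j y|)) := by
                ring
      _ = (∑ i ∈ Finset.range (n + 1), bern n i x)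
            * (∑ j ∈ Finset.range (m + 1), F * |bez m lam y j - bern m j y|)
          + ((∑ i ∈ Finset.range (n + 1), |bez n lam x i - bern n i x|)
              * (∑ j ∈ Finset.range (m + 1), F * bern m j y)
            + (∑ i ∈ Finset.range (n + 1), |bez n lam x i - bern n i x|)
              * (∑ j ∈ Finset.range (m + 1), F * |bez m lam y j - bern m j y|)) := by
          rw [Finset.sum_mul_sum, Finset.sum_mul_sum, Finset.sum_mul_sum]
          simp only [← Finset.sum_add_distrib]
      _ ≤ F * (2 / ((n : ℝ) - 1) + 2 / ((m : ℝ) - 1)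
          + 2 / ((n : ℝ) - 1) * (2 / ((m : ℝ) - 1))) := by
          have s1 : (∑ i ∈ Finset.range (n + 1), bern n i x) = 1 := sum_bern n x
          have s2 : (∑ j ∈ Finset.range (m + 1), F * |bez m lam y j - bern m j y|)
              = F * ∑ j ∈ Finset.range (m + 1), |bez m lam y j - bern m j y| :=
            (Finset.mul_sum _ _ _).symm
          have s3 : (∑ j ∈ Finset.range (m + 1), F * bern m j y) = F := by
            rw [← Finset.mul_sum, sum_bern, mul_one]
          rw [s1, s2, s3, one_mul]
          have hEn : (0 : ℝ) ≤ 2 / ((n : ℝ) - 1) := div_nonneg (by norm_num) (by linarith)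
          have hEm : (0 : ℝ) ≤ 2 / ((m : ℝ) - 1) := div_nonneg (by norm_num) (by linarith)
          have k1 : F * (∑ j ∈ Finset.range (m + 1), |bez m lam y j - bern m j y|)
              ≤ F * (2 / ((m : ℝ) - 1)) := mul_le_mul_of_nonneg_left hSB hF0
          have k2 : (∑ i ∈ Finset.range (n + 1), |bez n lam x i - bern n i x|) * F
              ≤ 2 / ((n : ℝ) - 1) * F := mul_le_mul_of_nonneg_right hSA hF0
          have k3 : (∑ i ∈ Finset.range (n + 1), |bez n lam x i - bern n i x|)
              * (F * (∑ j ∈ Finset.range (m + 1), |bez m lam y j - bern m j y|))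
              ≤ 2 / ((n : ℝ) - 1) * (F * (2 / ((m : ℝ) - 1))) :=
            mul_le_mul hSA k1 (mul_nonneg hF0 hSB0) hEn
          calc F * (∑ j ∈ Finset.range (m + 1), |bez m lam y j - bern m j y|)
              + ((∑ i ∈ Finset.range (n + 1), |bez n lam x i - bern n i x|) * F
              + (∑ i ∈ Finset.range (n + 1), |bez n lam x i - bern n i x|)
                * (F * ∑ j ∈ Finset.range (m + 1), |bez m lam y j - bern m j y|))
              ≤ F * (2 / ((m : ℝ) - 1)) + (2 / ((n : ℝ) - 1) * F
                + 2 / ((n : ℝ) - 1) * (F * (2 / ((m : ℝ) - 1)))) := by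
                linarith [k1, k2, k3]
            _ = F * (2 / ((n : ℝ) - 1) + 2 / ((m : ℝ) - 1)
                + 2 / ((n : ℝ) - 1) * (2 / ((m : ℝ) - 1))) := by ring
  rw [hdiff]
  exact (abs_add_le _ _).trans (add_le_add hT1 hT2)


/-- convergence of the bivariate λ-Bernstein operators in the weighted
norm `‖g‖_ρ = sup_{(x,y)∈I} |g(x,y)|/ρ(x,y)` with weight `ρ(x,y) = x² + y² + 1`. -/
theorem bivB_weighted_convergence (lam : ℝ) (hlam : lam ∈ Set.Icc (-1 : ℝ) 1)
    (f : ℝ → ℝ → ℝ)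
    (hf : ContinuousOn (Function.uncurry f) (Set.Icc (0 : ℝ) 1 ×ˢ Set.Icc (0 : ℝ) 1))
    (M : ℝ) (hM : 0 < M)
    (hbound : ∀ x ∈ Set.Icc (0 : ℝ) 1, ∀ y ∈ Set.Icc (0 : ℝ) 1,
      |f x y| ≤ M * (x ^ 2 + y ^ 2 + 1)) :
    Filter.Tendsto
      (fun p : ℕ × ℕ =>
        sSup {r | ∃ x ∈ Set.Icc (0 : ℝ) 1, ∃ y ∈ Set.Icc (0 : ℝ) 1,
          r = |bivB p.1 p.2 lam f x y - f x y| / (x ^ 2 + y ^ 2 + 1)})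
      (Filter.atTop ×ˢ Filter.atTop) (nhds 0) := by
  have hlabs : |lam| ≤ 1 := abs_le.mpr ⟨hlam.1, hlam.2⟩
  set F : ℝ := 3 * M with hF
  have hF0 : (0 : ℝ) ≤ F := by positivity
  have hFb : ∀ x ∈ Set.Icc (0:ℝ) 1, ∀ y ∈ Set.Icc (0:ℝ) 1, |f x y| ≤ F := by
    intro x hx y hy
    have h := hbound x hx y hy
    obtain ⟨hx0, hx1⟩ := hx; obtain ⟨hy0, hy1⟩ := hy
    have hx2 : x ^ 2 ≤ 1 := by nlinarith
    have hy2 : y ^ 2 ≤ 1 := by nlinarith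
    have : M * (x ^ 2 + y ^ 2 + 1) ≤ 3 * M := by nlinarith
    linarith
  -- uniform continuity
  have hK : IsCompact (Set.Icc (0 : ℝ) 1 ×ˢ Set.Icc (0 : ℝ) 1) :=
    isCompact_Icc.prod isCompact_Icc
  have huc : UniformContinuousOn (Function.uncurry f)
      (Set.Icc (0 : ℝ) 1 ×ˢ Set.Icc (0 : ℝ) 1) :=
    hK.uniformContinuousOn_of_continuous hf
  rw [Metric.tendsto_nhds]
  intro ε hε
  obtain ⟨δ, hδ, hδ'⟩ := Metric.uniformContinuousOn_iff.mp huc (ε / 4) (by linarith)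
  have hmod : ∀ x ∈ Set.Icc (0:ℝ) 1, ∀ y ∈ Set.Icc (0:ℝ) 1, ∀ u ∈ Set.Icc (0:ℝ) 1,
      ∀ v ∈ Set.Icc (0:ℝ) 1, |x - u| < δ → |y - v| < δ → |f x y - f u v| ≤ ε / 4 := by
    intro x hx y hy u hu v hv h1 h2
    have hd : dist ((x, y) : ℝ × ℝ) (u, v) < δ := by
      rw [Prod.dist_eq]
      exact max_lt (by rwa [Real.dist_eq]) (by rwa [Real.dist_eq])
    have := hδ' (x, y) (Set.mem_prod.mpr ⟨hx, hy⟩) (u, v) (Set.mem_prod.mpr ⟨hu, hv⟩) hd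
    rw [Function.uncurry_apply_pair, Function.uncurry_apply_pair, Real.dist_eq] at this
    exact this.le
  -- the explicit bound and its limit
  set B : ℕ × ℕ → ℝ := fun p =>
    ε / 4 + 2 * F / δ ^ 2 * (1 / (p.1 : ℝ) + 1 / (p.2 : ℝ))
      + F * (2 / ((p.1 : ℝ) - 1) + 2 / ((p.2 : ℝ) - 1)
        + 2 / ((p.1 : ℝ) - 1) * (2 / ((p.2 : ℝ) - 1))) with hB
  have h1n : Tendsto (fun n : ℕ => 1 / ((n : ℝ))) atTop (nhds 0) :=
    tendsto_one_div_atTop_nhds_zero_nat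
  have h2n : Tendsto (fun n : ℕ => 2 / ((n : ℝ) - 1)) atTop (nhds 0) := by
    apply Tendsto.div_atTop (tendsto_const_nhds)
    have := tendsto_atTop_add_const_right atTop (-1 : ℝ) tendsto_natCast_atTop_atTop
    simpa [sub_eq_add_neg] using this
  have hBlim : Tendsto B (atTop ×ˢ atTop) (nhds
      (ε / 4 + 2 * F / δ ^ 2 * (0 + 0) + F * (0 + 0 + 0 * 0))) := by
    apply Tendsto.add
    apply Tendsto.add tendsto_const_nhds
    · exact (tendsto_const_nhds.mul ((h1n.comp tendsto_fst).add (h1n.comp tendsto_snd)))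
    · exact tendsto_const_nhds.mul
        (((h2n.comp tendsto_fst).add (h2n.comp tendsto_snd)).add
          ((h2n.comp tendsto_fst).mul (h2n.comp tendsto_snd)))
  have hBlim' : Tendsto B (atTop ×ˢ atTop) (nhds (ε / 4)) := by
    convert hBlim using 2; ring
  have hev1 : ∀ᶠ p : ℕ × ℕ in atTop ×ˢ atTop, 2 ≤ p.1 :=
    tendsto_fst.eventually (eventually_ge_atTop 2)
  have hev2 : ∀ᶠ p : ℕ × ℕ in atTop ×ˢ atTop, 2 ≤ p.2 :=
    tendsto_snd.eventually (eventually_ge_atTop 2)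
  have hevB : ∀ᶠ p : ℕ × ℕ in atTop ×ˢ atTop, B p < ε :=
    hBlim'.eventually_lt_const (by linarith)
  filter_upwards [hev1, hev2, hevB] with p hp1 hp2 hpB
  -- key estimate at every point of the square
  have hkey : ∀ x ∈ Set.Icc (0:ℝ) 1, ∀ y ∈ Set.Icc (0:ℝ) 1,
      |bivB p.1 p.2 lam f x y - f x y| ≤ B p := fun x hx y hy =>
    key_est lam hlabs f F δ (ε / 4) hδ (by linarith) hFb hmod hp1 hp2 hx hy
  have hB0 : 0 ≤ B p :=
    le_trans (abs_nonneg _) (hkey 0 (by norm_num) 0 (by norm_num))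
  have hsup_le : sSup {r | ∃ x ∈ Set.Icc (0 : ℝ) 1, ∃ y ∈ Set.Icc (0 : ℝ) 1,
      r = |bivB p.1 p.2 lam f x y - f x y| / (x ^ 2 + y ^ 2 + 1)} ≤ B p := by
    apply Real.sSup_le _ hB0
    rintro r ⟨x, hx, y, hy, rfl⟩
    have hρ : (1 : ℝ) ≤ x ^ 2 + y ^ 2 + 1 := by nlinarith [sq_nonneg x, sq_nonneg y]
    calc |bivB p.1 p.2 lam f x y - f x y| / (x ^ 2 + y ^ 2 + 1)
        ≤ |bivB p.1 p.2 lam f x y - f x y| / 1 :=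
          div_le_div_of_nonneg_left (abs_nonneg _) one_pos hρ |> fun h => h
      _ = |bivB p.1 p.2 lam f x y - f x y| := div_one _
      _ ≤ B p := hkey x hx y hy
  have hsup_nonneg : 0 ≤ sSup {r | ∃ x ∈ Set.Icc (0 : ℝ) 1, ∃ y ∈ Set.Icc (0 : ℝ) 1,
      r = |bivB p.1 p.2 lam f x y - f x y| / (x ^ 2 + y ^ 2 + 1)} := by
    apply Real.sSup_nonneg
    rintro r ⟨x, hx, y, hy, rfl⟩
    have hρ : (0 : ℝ) < x ^ 2 + y ^ 2 + 1 := by positivity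
    positivity
  rw [Real.dist_eq, sub_zero, abs_of_nonneg hsup_nonneg]
  exact lt_of_le_of_lt hsup_le hpB
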